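/- Let Q be a self-join-free CQ whose FD-extension Q+ is cyclic, and let H_pm = (V_pm, E_pm) be a pseudo-minor of H(Q+) in Tet_pm(Q+) (isomorphic to some Tetra(k)). Then for every non-trivial FD X -> y in Delta_{Q+}, not all of X union {y} is contained in V_pm. -/

import Mathlib

structure Hypergraph' (V : Type*) where
  edges : Set (Set V)
  nonempty_of_mem : ∀ e ∈ edges, e.Nonempty

namespace Hypergraph'

variable {V : Type*}

/-- The vertex set of a hypergraph: all vertices occurring in some edge. -/
def vertexSet (H : Hypergraph' V) : Set V := ⋃ e ∈ H.edges, e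

/-- Two vertices are neighbors if they appear together in some edge. -/
def Neighbors (H : Hypergraph' V) (u v : V) : Prop := ∃ e ∈ H.edges, u ∈ e ∧ v ∈ e

/-- A clique: a set of pairwise neighboring vertices. -/
def IsClique (H : Hypergraph' V) (C : Set V) : Prop := ∀ u ∈ C, ∀ v ∈ C, H.Neighbors u v

/-- Conformal: every clique is contained in some edge. -/
def Conformal (H : Hypergraph' V) : Prop := ∀ C : Set V, H.IsClique C → ∃ e ∈ H.edges, C ⊆ e

/-- A chordless cycle (x_1, ..., x_n), n ≥ 3, of distinct vertices: the neighboring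
pairs among them are exactly the consecutive (cyclically) ones. -/
def HasChordlessCycle (H : Hypergraph' V) : Prop :=
  ∃ (n : ℕ) (x : Fin (n + 3) → V), Function.Injective x ∧
    (∀ i, x i ∈ H.vertexSet) ∧
    ∀ i j : Fin (n + 3), i ≠ j → (H.Neighbors (x i) (x j) ↔ (j = i + 1 ∨ i = j + 1))

/-- A join tree: a tree on the edges of `H` such that for each vertex the set of
edges containing it induces a connected subtree (running intersection property). -/
def IsJoinTree (H : Hypergraph' V) (T : SimpleGraph ↥H.edges) : Prop :=
  T.IsTree ∧ ∀ v ∈ H.vertexSet, (T.induce {e : ↥H.edges | v ∈ e.1}).Connected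

/-- A hypergraph is acyclic if it admits a join tree. -/
def Acyclic (H : Hypergraph' V) : Prop := ∃ T : SimpleGraph ↥H.edges, H.IsJoinTree T

end Hypergraph'
/-- Vertex removal: delete `v` from the vertex set and from every edge
(dropping edges that become empty). -/
def VertexRemovalOf {V : Type*} (v : V) (H H' : Hypergraph' V) : Prop :=
  H'.edges = {f | ∃ e ∈ H.edges, f = e \ {v} ∧ f.Nonempty}

def VertexRemoval {V : Type*} (H H' : Hypergraph' V) : Prop :=
  ∃ v : V, VertexRemovalOf v H H'

/-- Edge removal: delete an edge `e` contained in some other edge `e'`. -/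
def EdgeRemoval {V : Type*} (H H' : Hypergraph' V) : Prop :=
  ∃ e ∈ H.edges, (∃ e' ∈ H.edges, e' ≠ e ∧ e ⊆ e') ∧ H'.edges = H.edges \ {e}

/-- Edge contraction: replace all occurrences of `v` by a neighbor `u`. -/
def EdgeContraction {V : Type*} [DecidableEq V] (H H' : Hypergraph' V) : Prop :=
  ∃ u v : V, u ≠ v ∧ H.Neighbors u v ∧
    H'.edges = (fun e => (fun w => if w = v then u else w) '' e) '' H.edges

def PMStep {V : Type*} [DecidableEq V] (H H' : Hypergraph' V) : Prop :=
  VertexRemoval H H' ∨ EdgeRemoval H H' ∨ EdgeContraction H H'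

/-- `H'` is a pseudo-minor of `H`: obtained by a finite sequence of vertex
removals, edge removals, and edge contractions. -/
def IsPseudoMinor {V : Type*} [DecidableEq V] (H H' : Hypergraph' V) : Prop :=
  Relation.ReflTransGen PMStep H H'

/-- `H` is isomorphic to `Tetra(k)`: the hypergraph on `k` vertices whose edges
are exactly the complements of singletons. -/
def IsTetra {V : Type*} (k : ℕ) (H : Hypergraph' V) : Prop :=
  ∃ f : Fin k → V, Function.Injective f ∧
    H.edges = {e | ∃ i : Fin k, e = f '' {j | j ≠ i}}
/-- `H` is a chordless cycle hypergraph on `n ≥ 3` distinct vertices: its edges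
are exactly the consecutive pairs (cyclically). -/
def IsCycleHypergraph {V : Type*} (H : Hypergraph' V) : Prop :=
  ∃ (n : ℕ) (x : Fin (n + 3) → V), Function.Injective x ∧
    H.edges = {e | ∃ i : Fin (n + 3), e = {x i, x (i + 1)}}

/-- The pseudo-minors of `H` in `Tet_pm(H)`: isomorphic to some `Tetra(k)` and
obtained either by (1) vertex removals followed by all possible edge removals,
or (2) vertex and edge removals leading to a chordless cycle, followed by edge
contractions and edge removals yielding a `Tetra(3)`. -/
def TetPM {V : Type*} [DecidableEq V] (H Hpm : Hypergraph' V) : Prop :=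
  ((∃ H₁ : Hypergraph' V, Relation.ReflTransGen VertexRemoval H H₁ ∧
      Relation.ReflTransGen EdgeRemoval H₁ Hpm ∧
      ∀ H₂ : Hypergraph' V, ¬ EdgeRemoval Hpm H₂) ∨
    (∃ H₁ : Hypergraph' V,
      Relation.ReflTransGen (fun a b => VertexRemoval a b ∨ EdgeRemoval a b) H H₁ ∧
      IsCycleHypergraph H₁ ∧
      Relation.ReflTransGen (fun a b => EdgeContraction a b ∨ EdgeRemoval a b) H₁ Hpm ∧
      IsTetra 3 Hpm)) ∧
  ∃ k : ℕ, 3 ≤ k ∧ IsTetra k Hpm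


section Aux
variable {V : Type*}
open Hypergraph'

lemma mem_vertexSet_iff {H : Hypergraph' V} {w : V} :
    w ∈ H.vertexSet ↔ ∃ e ∈ H.edges, w ∈ e := by
  simp [Hypergraph'.vertexSet]

lemma step_basic {H H' : Hypergraph' V}
    (h : VertexRemoval H H' ∨ EdgeRemoval H H') :
    H'.vertexSet ⊆ H.vertexSet ∧
    (∀ f ∈ H'.edges, ∃ e ∈ H.edges, f ⊆ e ∧ e ∩ H'.vertexSet ⊆ f) ∧
    (∀ g ∈ H.edges, (g ∩ H'.vertexSet).Nonempty → ∃ f ∈ H'.edges, g ∩ H'.vertexSet ⊆ f) := by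
  rcases h with ⟨v, hE⟩ | ⟨e₀, he₀, ⟨e', he', hne, hsube⟩, hE⟩
  · have hvnot : v ∉ H'.vertexSet := by
      rintro hv
      rcases mem_vertexSet_iff.mp hv with ⟨f, hf, hvf⟩
      rw [hE] at hf
      rcases hf with ⟨e, he, rfl, -⟩
      exact hvf.2 rfl
    refine ⟨?_, ?_, ?_⟩
    · intro w hw
      rcases mem_vertexSet_iff.mp hw with ⟨f, hf, hwf⟩
      rw [hE] at hf
      rcases hf with ⟨e, he, rfl, -⟩
      exact mem_vertexSet_iff.mpr ⟨e, he, hwf.1⟩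
    · intro f hf
      rw [hE] at hf
      rcases hf with ⟨e, he, rfl, -⟩
      exact ⟨e, he, Set.diff_subset, fun w hw => ⟨hw.1, fun hwv => hvnot (hwv ▸ hw.2)⟩⟩
    · intro g hg hne'
      refine ⟨g \ {v}, ?_, ?_⟩
      · rw [hE]
        refine ⟨g, hg, rfl, ?_⟩
        rcases hne' with ⟨w, hwg, hwV⟩
        exact ⟨w, hwg, fun hwv => hvnot (hwv ▸ hwV)⟩
      · intro w hw
        exact ⟨hw.1, fun hwv => hvnot (hwv ▸ hw.2)⟩
  · refine ⟨?_, ?_, ?_⟩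
    · intro w hw
      rcases mem_vertexSet_iff.mp hw with ⟨f, hf, hwf⟩
      rw [hE] at hf
      exact mem_vertexSet_iff.mpr ⟨f, hf.1, hwf⟩
    · intro f hf
      rw [hE] at hf
      exact ⟨f, hf.1, subset_rfl, fun w hw => hw.1⟩
    · intro g hg _
      by_cases hg0 : g = e₀
      · refine ⟨e', ?_, fun w hw => hsube (hg0 ▸ hw.1)⟩
        rw [hE]; exact ⟨he', hne⟩
      · refine ⟨g, ?_, fun w hw => hw.1⟩
        rw [hE]; exact ⟨hg, hg0⟩

lemma chain_basic {H H' : Hypergraph' V}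
    (h : Relation.ReflTransGen (fun a b => VertexRemoval a b ∨ EdgeRemoval a b) H H') :
    H'.vertexSet ⊆ H.vertexSet ∧
    (∀ f ∈ H'.edges, ∃ e ∈ H.edges, f ⊆ e ∧ e ∩ H'.vertexSet ⊆ f) ∧
    (∀ g ∈ H.edges, (g ∩ H'.vertexSet).Nonempty → ∃ f ∈ H'.edges, g ∩ H'.vertexSet ⊆ f) := by
  induction h with
  | refl =>
      exact ⟨subset_rfl, fun f hf => ⟨f, hf, subset_rfl, fun w hw => hw.1⟩,
        fun g hg _ => ⟨g, hg, fun w hw => hw.1⟩⟩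
  | tail hab hbc ih =>
      obtain ⟨ihV, ihI, ihJ⟩ := ih
      obtain ⟨sV, sI, sJ⟩ := step_basic hbc
      refine ⟨sV.trans ihV, ?_, ?_⟩
      · intro f hf
        obtain ⟨f', hf', hff', htr⟩ := sI f hf
        obtain ⟨e, he, hfe, htr'⟩ := ihI f' hf'
        refine ⟨e, he, hff'.trans hfe, fun w hw => htr ⟨htr' ⟨hw.1, sV hw.2⟩, hw.2⟩⟩
      · intro g hg hne
        have hne' : (g ∩ _).Nonempty := hne.mono (Set.inter_subset_inter_right g sV)
        obtain ⟨f', hf', htr'⟩ := ihJ g hg hne'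
        have hne'' : (f' ∩ _).Nonempty :=
          hne.mono (fun w hw => ⟨htr' ⟨hw.1, sV hw.2⟩, hw.2⟩)
        obtain ⟨f, hf, htr⟩ := sJ f' hf' hne''
        exact ⟨f, hf, fun w hw => htr ⟨htr' ⟨hw.1, sV hw.2⟩, hw.2⟩⟩

lemma chain_mono_ce [DecidableEq V] {H H' : Hypergraph' V}
    (h : Relation.ReflTransGen (fun a b => EdgeContraction a b ∨ EdgeRemoval a b) H H') :
    H'.vertexSet ⊆ H.vertexSet := by
  induction h with
  | refl => exact subset_rfl
  | tail hab hbc ih =>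
      refine subset_trans ?_ ih
      rcases hbc with ⟨u, v, huv, ⟨e₀, he₀, hu, hv⟩, hE⟩ | her
      · intro w hw
        rcases mem_vertexSet_iff.mp hw with ⟨f, hf, hwf⟩
        rw [hE] at hf
        rcases hf with ⟨g, hg, rfl⟩
        rcases hwf with ⟨z, hz, rfl⟩
        by_cases hzv : z = v
        · simp only [hzv, if_pos rfl]
          exact mem_vertexSet_iff.mpr ⟨e₀, he₀, hu⟩
        · simp only [if_neg hzv]
          exact mem_vertexSet_iff.mpr ⟨g, hg, hz⟩
      · exact (step_basic (Or.inr her)).1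

end Aux

/-- For a hypergraph `H = H(Q⁺)` of a cyclic FD-extension (so, by
the fixpoint property, each non-trivial FD `X → y` of `Δ_{Q⁺}` has `X ∪ {y}`
contained in some edge and every edge containing `X` contains `y`), and any
pseudo-minor `Hpm ∈ Tet_pm(H)`, not all of `X ∪ {y}` is contained in the vertex
set of `Hpm`. -/
theorem tetpm_misses_some_fd_variable
    {V : Type*} [DecidableEq V] (H Hpm : Hypergraph' V)
    (hcyc : ¬ H.Acyclic)
    (hpm : TetPM H Hpm)
    (X : Set V) (y : V)
    (hnontriv : y ∉ X) (hXne : X.Nonempty)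
    (hwit : ∃ e ∈ H.edges, X ⊆ e ∧ y ∈ e)
    (hclosed : ∀ e ∈ H.edges, X ⊆ e → y ∈ e) :
    ¬ (X ∪ {y} ⊆ Hpm.vertexSet) := by
  intro hsub
  obtain ⟨hcase, k, hk3, htet⟩ := hpm
  have hyV : y ∈ Hpm.vertexSet := hsub (Set.mem_union_right _ rfl)
  rcases hcase with ⟨H₁, hvr, her, -⟩ | ⟨H₁, hchain1, hcycle, hchain2, -⟩
  · -- Case 1: vertex removals then edge removals, Hpm is Tetra(k)
    have hchain : Relation.ReflTransGen
        (fun a b => VertexRemoval a b ∨ EdgeRemoval a b) H Hpm :=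
      Relation.ReflTransGen.trans (Relation.ReflTransGen.mono (p := fun a b => VertexRemoval a b ∨ EdgeRemoval a b) (fun a b h => Or.inl h) H H₁ hvr) (Relation.ReflTransGen.mono (p := fun a b => VertexRemoval a b ∨ EdgeRemoval a b) (fun a b h => Or.inr h) H₁ Hpm her)
    obtain ⟨-, hI, -⟩ := chain_basic hchain
    obtain ⟨f, hfinj, hE⟩ := htet
    -- find the index of y
    obtain ⟨ey, heyE, hyey⟩ := mem_vertexSet_iff.mp hyV
    rw [hE] at heyE
    obtain ⟨i, rfl⟩ := heyE
    obtain ⟨j₀, -, hj₀⟩ := hyey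
    -- the edge missing y
    have heYE : f '' {j | j ≠ j₀} ∈ Hpm.edges := by rw [hE]; exact ⟨j₀, rfl⟩
    have hXeY : X ⊆ f '' {j | j ≠ j₀} := by
      intro x hx
      have hxV : x ∈ Hpm.vertexSet := hsub (Set.mem_union_left _ hx)
      obtain ⟨ex, hexE, hxex⟩ := mem_vertexSet_iff.mp hxV
      rw [hE] at hexE
      obtain ⟨i', rfl⟩ := hexE
      obtain ⟨jx, -, hjx⟩ := hxex
      refine ⟨jx, ?_, hjx⟩
      intro hjj
      exact hnontriv ((hj₀ ▸ hjx ▸ congrArg f hjj : x = y) ▸ hx)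
    have hynot : y ∉ f '' {j | j ≠ j₀} := by
      rintro ⟨j, hj, hjy⟩
      exact hj (hfinj (hjy.trans hj₀.symm))
    obtain ⟨e, heH, hsube, htrace⟩ := hI _ heYE
    exact hynot (htrace ⟨hclosed e heH (hXeY.trans hsube), hyV⟩)
  · -- Case 2: reaches a chordless cycle, then contractions
    have hmono2 : Hpm.vertexSet ⊆ H₁.vertexSet := chain_mono_ce hchain2
    have hsub1 : X ∪ {y} ⊆ H₁.vertexSet := fun w hw => hmono2 (hsub hw)
    have hyV1 : y ∈ H₁.vertexSet := hsub1 (Set.mem_union_right _ rfl)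
    obtain ⟨-, hI, hJ⟩ := chain_basic hchain1
    obtain ⟨e, heH, hXe, hye⟩ := hwit
    have hne : (e ∩ H₁.vertexSet).Nonempty := ⟨y, hye, hyV1⟩
    obtain ⟨g, hgE, hg⟩ := hJ e heH hne
    have hXg : X ⊆ g := fun x hx => hg ⟨hXe hx, hsub1 (Set.mem_union_left _ hx)⟩
    have hyg : y ∈ g := hg ⟨hye, hyV1⟩
    have hclosed1 : ∀ g' ∈ H₁.edges, X ⊆ g' → y ∈ g' := by
      intro g' hg' hXg'
      obtain ⟨e', he', hsub', htr'⟩ := hI g' hg'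
      exact htr' ⟨hclosed e' he' (hXg'.trans hsub'), hyV1⟩
    obtain ⟨n, xc, hxinj, hEc⟩ := hcycle
    rw [hEc] at hgE
    obtain ⟨i, rfl⟩ := hgE
    have hne1 : (1 : Fin (n + 3)) ≠ 0 := by
      intro h; have := congrArg Fin.val h; simp [Fin.ext_iff] at this
    have hne2 : (2 : Fin (n + 3)) ≠ 0 := by
      intro h; have := congrArg Fin.val h; simp [Fin.ext_iff] at this; rw [Nat.mod_eq_of_lt (by omega)] at this; omega
    rcases hyg with hyi | hyi1
    · -- y = xc i; then X ⊆ {xc (i+1)}; use edge {xc (i+1), xc (i+2)}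
      have hXs : X ⊆ {xc (i + 1)} := by
        intro x hx
        rcases hXg hx with h | h
        · exact absurd (h.trans hyi.symm ▸ hx) hnontriv
        · exact h
      have hg2 : ({xc (i + 1), xc (i + 1 + 1)} : Set V) ∈ H₁.edges := by
        rw [hEc]; exact ⟨i + 1, rfl⟩
      have hXg2 : X ⊆ ({xc (i + 1), xc (i + 1 + 1)} : Set V) := by
        intro x hx
        exact Set.mem_insert_iff.mpr (Or.inl (hXs hx))
      have hy2 := hclosed1 _ hg2 hXg2
      rcases hy2 with h | h
      · exact hne1 (left_eq_add.mp (hxinj (hyi.symm.trans h)))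
      · have : i = i + 1 + 1 := hxinj (hyi.symm.trans h)
        rw [add_assoc] at this
        have h2 : (1 + 1 : Fin (n + 3)) = 0 := left_eq_add.mp this
        exact hne2 (by rw [← h2]; rfl)
    · -- y = xc (i+1); then X ⊆ {xc i}; use edge {xc (i-1), xc i}
      have hyi1 : y = xc (i + 1) := hyi1
      have hXs : X ⊆ {xc i} := by
        intro x hx
        rcases hXg hx with h | h
        · exact h
        · exact absurd ((h.trans hyi1.symm) ▸ hx) hnontriv
      have hg2 : ({xc (i - 1), xc (i - 1 + 1)} : Set V) ∈ H₁.edges := by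
        rw [hEc]; exact ⟨i - 1, rfl⟩
      have hXg2 : X ⊆ ({xc (i - 1), xc (i - 1 + 1)} : Set V) := by
        intro x hx
        have : x = xc i := hXs hx
        rw [sub_add_cancel]
        exact Set.mem_insert_iff.mpr (Or.inr this)
      have hy2 := hclosed1 _ hg2 hXg2
      rw [sub_add_cancel] at hy2
      rcases hy2 with h | h
      · have heq : i + 1 = i - 1 := hxinj (hyi1.symm.trans h)
        have h2 : i + 1 + 1 = i := by rw [heq, sub_add_cancel]
        rw [add_assoc, show (1 + 1 : Fin (n + 3)) = 2 from rfl] at h2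
        exact hne2 (add_eq_left.mp h2)
      · have : i + 1 = i := hxinj (hyi1.symm.trans h)
        exact hne1 (left_eq_add.mp this.symm)
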